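/- Let Φ satisfy the kernel assumptions with ‖Φ‖_∞ ≤ 1, and suppose h is small enough that 4 h^D ρ̄(y,h) < ‖Φ‖_∞ and the set A₁ = {x : Φ((x−y)/h) > ‖Φ‖_∞/2} has ρ-measure at least c·h^D·ρ(y) for some c > 0. Then the variance of the single-particle estimator is bounded below: Var(ρ̃(y,p,h)) ≥ (‖Φ‖_∞/(4h^D))² · c·h^D·ρ(y), i.e., the Monte Carlo error bound O(√(ρ(y)/(N h^D))) is asymptotically tight. -/

import Mathlib

open MeasureTheory

/-- lower bound on the variance of the single-particle estimator,
showing the Monte Carlo error bound is asymptotically tight.  Here `M = ⨆ x, Φ x`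
plays the role of `‖Φ‖_∞`, and `A₁ = {x : Φ((x−y)/h) > M/2}`. -/
theorem single_particle_estimator_variance_lower_bound
    {D : ℕ} (hD : 1 ≤ D) (h r c : ℝ) (hh : 0 < h) (hr : 0 < r) (hc : 0 < c)
    (y : EuclideanSpace ℝ (Fin D))
    (Φ ρ : EuclideanSpace ℝ (Fin D) → ℝ)
    (hΦmeas : Measurable Φ)
    (hΦ0 : ∀ x, 0 ≤ Φ x) (hΦ1 : ∀ x, Φ x ≤ 1)
    (hΦsupp : ∀ x, r < ‖x‖ → Φ x = 0)
    (hΦint : ∫ x, Φ x = 1)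
    (hρmeas : Measurable ρ)
    (hρ0 : ∀ x, 0 ≤ ρ x) (hρint : Integrable ρ) (hρ1 : ∫ x, ρ x = 1)
    {Ω : Type*} [MeasureSpace Ω] [IsProbabilityMeasure (volume : Measure Ω)]
    (p : Ω → EuclideanSpace ℝ (Fin D)) (hp : Measurable p)
    (hdens : Measure.map p volume
      = (volume : Measure (EuclideanSpace ℝ (Fin D))).withDensity
          (fun x => ENNReal.ofReal (ρ x)))
    -- `M = ‖Φ‖_∞`
    (M : ℝ) (hM : M = ⨆ x, Φ x)
    -- h is small enough:
    (hsmall : 4 * h ^ (D : ℕ) * (h ^ (-(D : ℤ)) * ∫ x, ρ x * Φ (h⁻¹ • (x - y))) < M)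
    -- the set A₁ carries ρ-mass at least c h^D ρ(y):
    (hA₁ : c * h ^ (D : ℕ) * ρ y
      ≤ ∫ x in {x | M / 2 < Φ (h⁻¹ • (x - y))}, ρ x) :
    (M / (4 * h ^ (D : ℕ))) ^ 2 * (c * h ^ (D : ℕ) * ρ y)
      ≤ (∫ ω, (h ^ (-(D : ℤ)) * Φ (h⁻¹ • (p ω - y))) ^ 2)
        - (∫ ω, h ^ (-(D : ℤ)) * Φ (h⁻¹ • (p ω - y))) ^ 2 := by
  -- Notation
  set φ : EuclideanSpace ℝ (Fin D) → ℝ := fun x => Φ (h⁻¹ • (x - y)) with hφ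
  have hφmeas : Measurable φ :=
    hΦmeas.comp ((measurable_id.sub measurable_const).const_smul h⁻¹)
  have hHD : (0:ℝ) < h ^ (D : ℕ) := pow_pos hh D
  have hK : h ^ (-(D : ℤ)) = (h ^ (D : ℕ))⁻¹ := by
    rw [zpow_neg, zpow_natCast]
  set K : ℝ := (h ^ (D : ℕ))⁻¹ with hKdef
  have hK0 : 0 < K := inv_pos.mpr hHD
  set f : Ω → ℝ := fun ω => K * φ (p ω) with hf
  have hfmeas : Measurable f := (hφmeas.comp hp).const_mul K
  have hf0 : ∀ ω, 0 ≤ f ω := fun ω => mul_nonneg hK0.le (hΦ0 _)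
  have hfle : ∀ ω, f ω ≤ K := fun ω => by
    have := hΦ1 (h⁻¹ • (p ω - y))
    calc K * φ (p ω) ≤ K * 1 := by
          exact mul_le_mul_of_nonneg_left this hK0.le
      _ = K := mul_one K
  have hfint : Integrable f := by
    refine (integrable_const K).mono' hfmeas.aestronglyMeasurable ?_
    filter_upwards with ω
    rw [Real.norm_eq_abs, abs_of_nonneg (hf0 ω)]
    exact hfle ω
  have hf2int : Integrable (fun ω => f ω ^ 2) := by
    refine (integrable_const (K ^ 2)).mono'
      ((hfmeas.pow_const 2).aestronglyMeasurable) ?_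
    filter_upwards with ω
    rw [Real.norm_eq_abs, abs_of_nonneg (sq_nonneg _)]
    exact pow_le_pow_left₀ (hf0 ω) (hfle ω) 2
  set m : ℝ := ∫ ω, f ω with hm
  -- mean identification
  have hmean : m = K * ∫ x, ρ x * φ x := by
    have h1 : ∫ x, φ x ∂(Measure.map p volume) = ∫ ω, φ (p ω) :=
      integral_map hp.aemeasurable hφmeas.aestronglyMeasurable
    have h2 : ∫ x, φ x ∂(Measure.map p volume) = ∫ x, ρ x * φ x := by
      rw [hdens]
      have : (fun x => ENNReal.ofReal (ρ x))
          = fun x => ((Real.toNNReal (ρ x) : NNReal) : ENNReal) := rfl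
      rw [this, integral_withDensity_eq_integral_smul
        (f := fun x => Real.toNNReal (ρ x)) (measurable_real_toNNReal.comp hρmeas) φ]
      congr 1
      ext x
      simp [NNReal.smul_def, Real.coe_toNNReal _ (hρ0 x)]
    rw [hm, hf]
    rw [integral_const_mul]
    rw [← h1, h2]
  have hm0 : 0 ≤ m := by
    rw [hm]
    exact integral_nonneg hf0
  have hmlt : m < M / (4 * h ^ (D : ℕ)) := by
    rw [lt_div_iff₀ (by positivity)]
    have : 4 * h ^ (D : ℕ) * m < M := by
      rw [hmean, ← hK]
      exact hsmall
    linarith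
  -- the event in Ω
  set A₁ : Set (EuclideanSpace ℝ (Fin D)) := {x | M / 2 < φ x} with hA₁def
  have hA₁meas : MeasurableSet A₁ := measurableSet_lt measurable_const hφmeas
  set S : Set Ω := p ⁻¹' A₁ with hS
  have hSmeas : MeasurableSet S := hp hA₁meas
  -- probability of S
  have hprob : (volume S).toReal = ∫ x in A₁, ρ x := by
    have h1 : volume S = (Measure.map p volume) A₁ := by
      rw [Measure.map_apply hp hA₁meas]
    have h2 : (Measure.map p volume) A₁ = ∫⁻ x in A₁, ENNReal.ofReal (ρ x) := by
      rw [hdens, withDensity_apply _ hA₁meas]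
    have h3 : ∫ x in A₁, ρ x = (∫⁻ x in A₁, ENNReal.ofReal (ρ x)).toReal := by
      exact integral_eq_lintegral_of_nonneg_ae (ae_of_all _ hρ0)
        hρmeas.aestronglyMeasurable
    rw [h1, h2, h3]
  -- variance identity
  have hsub : Integrable (fun ω => f ω ^ 2 - (2 * m) * f ω) :=
    hf2int.sub (hfint.const_mul _)
  have hvint : Integrable (fun ω => (f ω - m) ^ 2) := by
    have h' : Integrable (fun ω => (f ω ^ 2 - (2 * m) * f ω) + m ^ 2) :=
      hsub.add (integrable_const _)
    exact h'.congr (by filter_upwards with ω; ring)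
  have hvar : ∫ ω, (f ω - m) ^ 2 = (∫ ω, f ω ^ 2) - m ^ 2 := by
    have e1 : ∫ ω, (f ω - m) ^ 2 = ∫ ω, ((f ω ^ 2 - (2 * m) * f ω) + m ^ 2) := by
      apply integral_congr_ae
      filter_upwards with ω
      ring
    rw [e1, integral_add hsub (integrable_const _),
      integral_sub hf2int (hfint.const_mul _), integral_const_mul, integral_const]
    simp [← hm]
    ring
  -- lower bound on variance
  have hcore : (M / (4 * h ^ (D : ℕ))) ^ 2 * (volume S).toReal
      ≤ ∫ ω, (f ω - m) ^ 2 := by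
    have hle1 : ∫ ω in S, (f ω - m) ^ 2 ≤ ∫ ω, (f ω - m) ^ 2 :=
      setIntegral_le_integral hvint (ae_of_all _ fun ω => sq_nonneg _)
    have hle2 : (M / (4 * h ^ (D : ℕ))) ^ 2 * (volume S).toReal
        ≤ ∫ ω in S, (f ω - m) ^ 2 := by
      rw [mul_comm, ← smul_eq_mul, ← Measure.real_def]
      refine setIntegral_ge_of_const_le hSmeas (measure_ne_top _ _) ?_ ?_
      · intro ω hω
        have hωA : M / 2 < φ (p ω) := hω
        have hfω : M / (2 * h ^ (D : ℕ)) ≤ f ω := by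
          rw [hf]
          have : K * (M / 2) ≤ K * φ (p ω) :=
            mul_le_mul_of_nonneg_left hωA.le hK0.le
          calc M / (2 * h ^ (D : ℕ)) = K * (M / 2) := by
                rw [hKdef, inv_mul_eq_div, div_div]
            _ ≤ K * φ (p ω) := this
        have hdiff : M / (4 * h ^ (D : ℕ)) ≤ f ω - m := by
          have : M / (2 * h ^ (D : ℕ)) - M / (4 * h ^ (D : ℕ))
              = M / (4 * h ^ (D : ℕ)) := by
            field_simp; ring
          linarith [hmlt, hfω]
        have h4 : 0 ≤ M / (4 * h ^ (D : ℕ)) := le_trans hm0 hmlt.le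
        exact pow_le_pow_left₀ h4 hdiff 2
      · exact hvint.integrableOn
    linarith
  -- assemble
  have key : (M / (4 * h ^ (D : ℕ))) ^ 2 * (c * h ^ (D : ℕ) * ρ y)
      ≤ (∫ ω, f ω ^ 2) - m ^ 2 := by
    rw [← hvar]
    refine le_trans ?_ hcore
    apply mul_le_mul_of_nonneg_left _ (sq_nonneg _)
    rw [hprob]
    exact hA₁
  have ef : ∀ ω, h ^ (-(D : ℤ)) * Φ (h⁻¹ • (p ω - y)) = f ω := fun ω => by
    rw [hf, hK]
  simp_rw [ef]
  exact key
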